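/- Let m ≥ 1, n = 2^m, let f ∈ ZMod n, and let J ⊆ {1,…,m}. Define H : ZMod n → ℂ by H(ξ) = ∏_{j ∈ J} (1 + e^{2πi·a(ξ)/2^j})/2, where a(ξ) ∈ ℤ is any integer lift of ξ − f (the value is well defined since 2^j divides n). Then there exists G : ZMod n → ℂ whose discrete Fourier transform equals H, whose support is contained in the set {−∑_{j ∈ J} ε_j·(n/2^j) : ε ∈ {0,1}^J} ⊆ ZMod n, and whose support has cardinality exactly 2^{|J|}. -/

import Mathlib

open scoped BigOperators

/-- The one-dimensional discrete Fourier transform on `ZMod n`. -/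
noncomputable def dft1 (n : ℕ) [NeZero n] (x : ZMod n → ℂ) : ZMod n → ℂ :=
  fun f => ∑ t : ZMod n, x t *
    Complex.exp (-(2 * (Real.pi : ℂ) * Complex.I) * (((f * t : ZMod n)).val : ℂ) / (n : ℂ))

noncomputable def eZ (n : ℕ) (k : ℤ) : ℂ := Complex.exp (2 * (Real.pi : ℂ) * Complex.I * k / n)

lemma eZ_add (n : ℕ) [NeZero n] (a b : ℤ) : eZ n (a + b) = eZ n a * eZ n b := by
  have hn : (n : ℂ) ≠ 0 := Nat.cast_ne_zero.mpr (NeZero.ne n)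
  rw [eZ, eZ, eZ, ← Complex.exp_add]
  congr 1
  push_cast
  field_simp

lemma eZ_congr (n : ℕ) [NeZero n] {a b : ℤ} (h : ((a : ZMod n) : ZMod n) = (b : ZMod n)) :
    eZ n a = eZ n b := by
  have hmod : a ≡ b [ZMOD n] := (ZMod.intCast_eq_intCast_iff a b n).mp h
  obtain ⟨d, hd⟩ := hmod.dvd
  have hb : b = a + n * d := by linarith
  subst hb
  rw [eZ_add]
  have h1 : eZ n ((n : ℤ) * d) = 1 := by
    have hn : (n : ℂ) ≠ 0 := Nat.cast_ne_zero.mpr (NeZero.ne n)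
    rw [eZ]
    have : 2 * (Real.pi : ℂ) * Complex.I * ((n : ℤ) * d : ℤ) / n
        = d * (2 * Real.pi * Complex.I) := by
      push_cast; field_simp
    rw [this, Complex.exp_int_mul_two_pi_mul_I]
  rw [h1, mul_one]

lemma eZ_sum (n : ℕ) [NeZero n] (A : ℤ) (s : Finset ℕ) (g : ℕ → ℤ) :
    eZ n (A * ∑ j ∈ s, g j) = ∏ j ∈ s, eZ n (A * g j) := by
  classical
  induction s using Finset.cons_induction with
  | empty => simp [eZ]
  | cons a s ha ih => rw [Finset.sum_cons, Finset.prod_cons, mul_add, eZ_add, ih]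

lemma two_pow_range_sum (m : ℕ) : ∑ k ∈ Finset.range m, 2 ^ k = 2 ^ m - 1 := by
  induction m with
  | zero => simp
  | succ m ih =>
    rw [Finset.sum_range_succ, ih]
    have h1 : 1 ≤ 2 ^ m := Nat.one_le_two_pow
    have : 2 ^ (m + 1) = 2 * 2 ^ m := by ring
    omega

lemma two_pow_sum_lt (m : ℕ) (T : Finset ℕ) (hT : ∀ k ∈ T, k < m) :
    ∑ k ∈ T, 2 ^ k < 2 ^ m := by
  have hsub : T ⊆ Finset.range m := fun k hk => Finset.mem_range.mpr (hT k hk)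
  calc ∑ k ∈ T, 2 ^ k ≤ ∑ k ∈ Finset.range m, 2 ^ k :=
        Finset.sum_le_sum_of_subset hsub
    _ = 2 ^ m - 1 := two_pow_range_sum m
    _ < 2 ^ m := by have := Nat.one_le_two_pow (n := m); omega

lemma two_pow_sum_inj (T T' : Finset ℕ) (h : ∑ k ∈ T, 2 ^ k = ∑ k ∈ T', 2 ^ k) : T = T' := by
  have := congrArg (fun x => x.bitIndices.toFinset) h
  simpa using this

lemma shifted_sum_image (m : ℕ) {J S : Finset ℕ} (hJ : ∀ j ∈ J, 1 ≤ j ∧ j ≤ m)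
    (hS : S ⊆ J) : ∑ j ∈ S, 2 ^ (m - j) = ∑ k ∈ S.image (fun j => m - j), 2 ^ k := by
  rw [Finset.sum_image]
  intro x hx y hy hxy
  have hx' := hJ x (hS hx); have hy' := hJ y (hS hy); beta_reduce at hxy; omega

lemma shifted_inj (m : ℕ) {J S S' : Finset ℕ} (hJ : ∀ j ∈ J, 1 ≤ j ∧ j ≤ m)
    (hS : S ⊆ J) (hS' : S' ⊆ J)
    (h : ∑ j ∈ S, 2 ^ (m - j) = ∑ j ∈ S', 2 ^ (m - j)) : S = S' := by
  rw [shifted_sum_image m hJ hS, shifted_sum_image m hJ hS'] at h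
  have himg := two_pow_sum_inj _ _ h
  ext j
  constructor
  · intro hj
    have : m - j ∈ S'.image (fun j => m - j) := by
      rw [← himg]; exact Finset.mem_image_of_mem _ hj
    obtain ⟨j', hj', hjj'⟩ := Finset.mem_image.mp this
    have h1 := hJ j (hS hj); have h2 := hJ j' (hS' hj')
    have : j' = j := by omega
    rwa [← this]
  · intro hj
    have : m - j ∈ S.image (fun j => m - j) := by
      rw [himg]; exact Finset.mem_image_of_mem _ hj
    obtain ⟨j', hj', hjj'⟩ := Finset.mem_image.mp this
    have h1 := hJ j (hS' hj); have h2 := hJ j' (hS hj')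
    have : j' = j := by omega
    rwa [← this]

lemma shifted_lt (m : ℕ) {J S : Finset ℕ} (hJ : ∀ j ∈ J, 1 ≤ j ∧ j ≤ m)
    (hS : S ⊆ J) : ∑ j ∈ S, 2 ^ (m - j) < 2 ^ m := by
  rw [shifted_sum_image m hJ hS]
  apply two_pow_sum_lt
  intro k hk
  obtain ⟨j, hj, rfl⟩ := Finset.mem_image.mp hk
  have := hJ j (hS hj); omega

theorem stmt7 (m : ℕ) (hm : 1 ≤ m) (n : ℕ) (hn : n = 2 ^ m) [NeZero n]
    (f : ZMod n) (J : Finset ℕ) (hJ : ∀ j ∈ J, 1 ≤ j ∧ j ≤ m)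
    (H : ZMod n → ℂ)
    (hH : ∀ ξ : ZMod n, H ξ = ∏ j ∈ J,
      (1 + Complex.exp (2 * (Real.pi : ℂ) * Complex.I * (((ξ - f : ZMod n)).val : ℂ)
        / ((2 : ℂ) ^ j))) / 2) :
    ∃ G : ZMod n → ℂ,
      dft1 n G = H ∧
      Function.support G ⊆
        Set.range (fun ε : {j // j ∈ J} → Bool =>
          -(∑ j : {j // j ∈ J},
              (if ε j then ((n / 2 ^ (j : ℕ) : ℕ) : ZMod n) else 0))) ∧
      (Function.support G).ncard = 2 ^ J.card := by
  classical
  have hnC : (n : ℂ) ≠ 0 := Nat.cast_ne_zero.mpr (NeZero.ne n)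
  set a : Finset ℕ → ℕ := fun S => ∑ j ∈ S, n / 2 ^ j with ha
  have hdiv : ∀ j ∈ J, n / 2 ^ j = 2 ^ (m - j) := by
    intro j hj
    rw [hn, Nat.pow_div (hJ j hj).2 (by norm_num)]
  have haval : ∀ S ⊆ J, a S = ∑ j ∈ S, 2 ^ (m - j) := by
    intro S hS
    exact Finset.sum_congr rfl fun j hj => hdiv j (hS hj)
  have halt : ∀ S ⊆ J, a S < n := by
    intro S hS
    rw [haval S hS, hn]
    exact shifted_lt m hJ hS
  set tpt : Finset ℕ → ZMod n := fun S => -((a S : ℕ) : ZMod n) with htpt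
  have tinj : ∀ S ⊆ J, ∀ S' ⊆ J, tpt S = tpt S' → S = S' := by
    intro S hS S' hS' h
    have h2 : ((a S : ℕ) : ZMod n) = ((a S' : ℕ) : ZMod n) := by
      simpa [htpt, neg_inj] using h
    have h3 : a S = a S' := by
      have := congrArg ZMod.val h2
      rwa [ZMod.val_cast_of_lt (halt S hS), ZMod.val_cast_of_lt (halt S' hS')] at this
    rw [haval S hS, haval S' hS'] at h3
    exact shifted_inj m hJ hS hS' h3
  set w : Finset ℕ → ℂ := fun S => eZ n (-((f.val : ℤ) * (a S : ℤ))) with hw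
  have hwne : ∀ S, w S ≠ 0 := fun S => Complex.exp_ne_zero _
  set G : ZMod n → ℂ := fun t =>
    (2 ^ J.card : ℂ)⁻¹ * ∑ S ∈ J.powerset, if t = tpt S then w S else 0 with hG
  have h2ne : ((2 : ℂ) ^ J.card)⁻¹ ≠ 0 := inv_ne_zero (pow_ne_zero _ two_ne_zero)
  have hval : ∀ x : ZMod n, ((x.val : ℕ) : ZMod n) = x := fun x => by
    simp [ZMod.natCast_val, ZMod.cast_id]
  -- G at the support points
  have hGval : ∀ S ∈ J.powerset, G (tpt S) = (2 ^ J.card : ℂ)⁻¹ * w S := by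
    intro S hS
    simp only [hG]
    congr 1
    rw [Finset.sum_eq_single S]
    · rw [if_pos rfl]
    · intro S' hS' hne
      rw [if_neg]
      intro heq
      exact hne (tinj S' (Finset.mem_powerset.mp hS') S (Finset.mem_powerset.mp hS) heq.symm)
    · intro h; exact absurd hS h
  have hex : ∀ t : ZMod n, G t ≠ 0 → ∃ S ∈ J.powerset, t = tpt S := by
    intro t ht
    by_contra h
    push_neg at h
    apply ht
    simp only [hG]
    rw [Finset.sum_eq_zero, mul_zero]
    intro S hS
    rw [if_neg (h S hS)]
  refine ⟨G, ?_, ?_, ?_⟩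
  · -- dft1 n G = H
    funext ξ
    simp only [dft1]
    have key : ∀ S ∈ J.powerset,
        w S * Complex.exp (-(2 * (Real.pi : ℂ) * Complex.I)
          * (((ξ * tpt S : ZMod n)).val : ℂ) / (n : ℂ))
        = eZ n ((((ξ - f : ZMod n)).val : ℤ) * (a S : ℤ)) := by
      intro S hS
      have hE : Complex.exp (-(2 * (Real.pi : ℂ) * Complex.I)
          * (((ξ * tpt S : ZMod n)).val : ℂ) / (n : ℂ))
          = eZ n (-(((ξ * tpt S : ZMod n)).val : ℤ)) := by
        rw [eZ]; congr 1; push_cast; ring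
      rw [hE, hw, ← eZ_add]
      apply eZ_congr
      push_cast
      rw [hval, hval, hval]
      simp only [htpt]
      push_cast
      ring
    have step1 : (∑ t : ZMod n, G t * Complex.exp (-(2 * (Real.pi : ℂ) * Complex.I)
          * (((ξ * t : ZMod n)).val : ℂ) / (n : ℂ)))
        = (2 ^ J.card : ℂ)⁻¹ * ∑ S ∈ J.powerset,
            eZ n ((((ξ - f : ZMod n)).val : ℤ) * (a S : ℤ)) := by
      have e1 : ∀ t : ZMod n, G t * Complex.exp (-(2 * (Real.pi : ℂ) * Complex.I)
            * (((ξ * t : ZMod n)).val : ℂ) / (n : ℂ))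
          = (2 ^ J.card : ℂ)⁻¹ * ∑ S ∈ J.powerset,
              (if t = tpt S then w S * Complex.exp (-(2 * (Real.pi : ℂ) * Complex.I)
                * (((ξ * t : ZMod n)).val : ℂ) / (n : ℂ)) else 0) := by
        intro t
        simp only [hG]
        rw [mul_assoc, Finset.sum_mul]
        congr 1
        apply Finset.sum_congr rfl
        intro S _
        split <;> simp
      calc (∑ t : ZMod n, G t * Complex.exp (-(2 * (Real.pi : ℂ) * Complex.I)
              * (((ξ * t : ZMod n)).val : ℂ) / (n : ℂ)))
          = ∑ t : ZMod n, (2 ^ J.card : ℂ)⁻¹ * ∑ S ∈ J.powerset,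
              (if t = tpt S then w S * Complex.exp (-(2 * (Real.pi : ℂ) * Complex.I)
                * (((ξ * t : ZMod n)).val : ℂ) / (n : ℂ)) else 0) :=
            Finset.sum_congr rfl fun t _ => e1 t
        _ = (2 ^ J.card : ℂ)⁻¹ * ∑ t : ZMod n, ∑ S ∈ J.powerset,
              (if t = tpt S then w S * Complex.exp (-(2 * (Real.pi : ℂ) * Complex.I)
                * (((ξ * t : ZMod n)).val : ℂ) / (n : ℂ)) else 0) := by
            rw [Finset.mul_sum]
        _ = (2 ^ J.card : ℂ)⁻¹ * ∑ S ∈ J.powerset, ∑ t : ZMod n,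
              (if t = tpt S then w S * Complex.exp (-(2 * (Real.pi : ℂ) * Complex.I)
                * (((ξ * t : ZMod n)).val : ℂ) / (n : ℂ)) else 0) := by
            rw [Finset.sum_comm]
        _ = (2 ^ J.card : ℂ)⁻¹ * ∑ S ∈ J.powerset,
              (w S * Complex.exp (-(2 * (Real.pi : ℂ) * Complex.I)
                * (((ξ * tpt S : ZMod n)).val : ℂ) / (n : ℂ))) := by
            congr 1
            apply Finset.sum_congr rfl
            intro S _
            rw [Finset.sum_ite_eq' Finset.univ (tpt S)]
            simp
        _ = (2 ^ J.card : ℂ)⁻¹ * ∑ S ∈ J.powerset,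
              eZ n ((((ξ - f : ZMod n)).val : ℤ) * (a S : ℤ)) := by
            congr 1
            exact Finset.sum_congr rfl key
    rw [step1, hH ξ]
    have hfac : ∀ j ∈ J,
        (1 + Complex.exp (2 * (Real.pi : ℂ) * Complex.I * (((ξ - f : ZMod n)).val : ℂ)
          / ((2 : ℂ) ^ j))) / 2
        = (eZ n ((((ξ - f : ZMod n)).val : ℤ) * ((n / 2 ^ j : ℕ) : ℤ)) + 1) / 2 := by
      intro j hj
      congr 1
      have hq : (2 : ℕ) ^ j * (n / 2 ^ j) = n :=
        Nat.mul_div_cancel' (by rw [hn]; exact pow_dvd_pow 2 (hJ j hj).2)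
      have hqc : ((2 : ℂ)) ^ j * ((n / 2 ^ j : ℕ) : ℂ) = (n : ℂ) := by
        exact_mod_cast congrArg (Nat.cast : ℕ → ℂ) hq
      have h2c : ((2 : ℂ)) ^ j ≠ 0 := pow_ne_zero _ two_ne_zero
      rw [eZ, add_comm]
      congr 1
      congr 1
      rw [div_eq_div_iff h2c hnC]
      simp only [Int.cast_mul, Int.cast_natCast]
      linear_combination (-(2 * (Real.pi : ℂ) * Complex.I * (((ξ - f : ZMod n)).val : ℂ))) * hqc
    rw [Finset.prod_congr rfl hfac, Finset.prod_div_distrib, Finset.prod_const,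
      Finset.prod_add]
    simp only [Finset.prod_const_one, mul_one]
    rw [div_eq_mul_inv, mul_comm]
    congr 1
    apply Finset.sum_congr rfl
    intro S hS
    rw [show (a S : ℤ) = ∑ j ∈ S, ((n / 2 ^ j : ℕ) : ℤ) by rw [ha]; push_cast; rfl,
      eZ_sum]
  · -- support ⊆ range
    intro t ht
    rw [Function.mem_support] at ht
    obtain ⟨S, hS, rfl⟩ := hex t ht
    have hSJ := Finset.mem_powerset.mp hS
    rw [Set.mem_range]
    refine ⟨fun j => decide ((j : ℕ) ∈ S), ?_⟩
    simp only [decide_eq_true_eq, htpt]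
    congr 1
    calc (∑ j : {j // j ∈ J},
          (if (j : ℕ) ∈ S then ((n / 2 ^ (j : ℕ) : ℕ) : ZMod n) else 0))
        = ∑ j ∈ J.attach, (if (j : ℕ) ∈ S then ((n / 2 ^ (j : ℕ) : ℕ) : ZMod n) else 0) := by
          rw [Finset.univ_eq_attach]
      _ = ∑ j ∈ J, (if j ∈ S then ((n / 2 ^ j : ℕ) : ZMod n) else 0) :=
          Finset.sum_attach J (fun j => if j ∈ S then ((n / 2 ^ j : ℕ) : ZMod n) else 0)
      _ = ∑ j ∈ J ∩ S, ((n / 2 ^ j : ℕ) : ZMod n) := Finset.sum_ite_mem J S _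
      _ = ∑ j ∈ S, ((n / 2 ^ j : ℕ) : ZMod n) := by rw [Finset.inter_eq_right.mpr hSJ]
      _ = ((a S : ℕ) : ZMod n) := by rw [ha]; push_cast; rfl
  · -- cardinality
    have hsupp : Function.support G = ↑(J.powerset.image tpt) := by
      ext t
      simp only [Function.mem_support, Finset.coe_image, Set.mem_image, Finset.mem_coe]
      constructor
      · intro ht
        obtain ⟨S, hS, rfl⟩ := hex t ht
        exact ⟨S, hS, rfl⟩
      · rintro ⟨S, hS, rfl⟩
        rw [hGval S hS]
        exact mul_ne_zero h2ne (hwne S)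
    rw [hsupp, Set.ncard_coe_finset, Finset.card_image_of_injOn, Finset.card_powerset]
    intro S hS S' hS' h
    exact tinj S (Finset.mem_powerset.mp hS) S' (Finset.mem_powerset.mp hS') h
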